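/- Let 0 < c ≤ 1 and let (λ_{i,j})_{(i,j)∈ℤ×ℤ} be a family of complex numbers such that ∑_{i,j∈ℤ} |λ_{i,j}|² ≤ 1 and ∑_{i∈ℤ} |λ_{i,0}|² ≥ c². Then ∑_{i,j∈ℤ} |λ_{i,j} − λ_{i,j+1}|² ≥ c⁴/(3 + 18c²). -/

import Mathlib

open Finset
open scoped ENNReal NNReal

theorem oneD (c D : ℝ) (hc0 : 0 < c) (hc1 : c ≤ 1) (s t : ℤ → ℝ)
    (hs0 : ∀ n, 0 ≤ s n) (hssum : Summable s) (hs1 : ∑' n, s n ≤ 1) (hsc : c ^ 2 ≤ s 0)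
    (ht0 : ∀ j, 0 ≤ t j) (htD : ∀ u : Finset ℤ, ∑ j ∈ u, t j ≤ D)
    (tripos : ∀ k : ℕ, Real.sqrt (s 0) ≤ Real.sqrt (s k) +
      ∑ j ∈ Finset.range k, Real.sqrt (t j))
    (trineg : ∀ k : ℕ, Real.sqrt (s 0) ≤ Real.sqrt (s (-k)) +
      ∑ j ∈ Finset.range k, Real.sqrt (t (-1 - j))) :
    c ^ 4 / (3 + 18 * c ^ 2) ≤ D := by
  have hD0 : 0 ≤ D := le_trans (by simp) (htD ∅)
  -- Cauchy-Schwarz for square-root sums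
  have hCS : ∀ (k : ℕ) (g : ℕ → ℤ), Function.Injective g →
      ∑ j ∈ range k, Real.sqrt (t (g j)) ≤ Real.sqrt (k * D) := by
    intro k g hg
    have h0 : 0 ≤ ∑ j ∈ range k, Real.sqrt (t (g j)) :=
      sum_nonneg fun _ _ => Real.sqrt_nonneg _
    rw [Real.le_sqrt h0 (by positivity)]
    have hsum_im : ∑ j ∈ range k, t (g j) ≤ D := by
      have him : ∑ j ∈ (range k).image g, t j = ∑ j ∈ range k, t (g j) :=
        Finset.sum_image (fun x _ y _ h => hg h)
      rw [← him]; exact htD _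
    calc (∑ j ∈ range k, Real.sqrt (t (g j))) ^ 2
        = (∑ j ∈ range k, 1 * Real.sqrt (t (g j))) ^ 2 := by simp
      _ ≤ (∑ j ∈ range k, 1 ^ 2) * (∑ j ∈ range k, Real.sqrt (t (g j)) ^ 2) :=
          sum_mul_sq_le_sq_mul_sq _ _ _
      _ = k * ∑ j ∈ range k, t (g j) := by
          simp [Real.sq_sqrt (ht0 _)]
      _ ≤ k * D := by
          exact mul_le_mul_of_nonneg_left hsum_im (by positivity)
  have hcs0 : c ≤ Real.sqrt (s 0) := (Real.le_sqrt hc0.le (hs0 0)).2 hsc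
  have key : ∀ k : ℕ, c - Real.sqrt (k * D) ≤ Real.sqrt (s k) ∧
      c - Real.sqrt (k * D) ≤ Real.sqrt (s (-k)) := by
    intro k
    constructor
    · have h1 := tripos k
      have h2 := hCS k (fun j => (j : ℤ)) (fun a b h => by simpa using h)
      linarith
    · have h1 := trineg k
      have h2 := hCS k (fun j => (-1 - j : ℤ)) (fun a b h => by simp only at h; omega)
      linarith
  have keysq : ∀ k : ℕ, Real.sqrt (k * D) ≤ c →
      (c - Real.sqrt (k * D)) ^ 2 ≤ s (k : ℤ) ∧
      (c - Real.sqrt (k * D)) ^ 2 ≤ s (-(k : ℤ)) := by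
    intro k hk
    have h0 : 0 ≤ c - Real.sqrt (k * D) := by linarith
    constructor
    · have := (key k).1
      calc (c - Real.sqrt (k * D)) ^ 2 ≤ Real.sqrt (s (k : ℤ)) ^ 2 := by
            apply pow_le_pow_left₀ h0 this
        _ = s (k : ℤ) := Real.sq_sqrt (hs0 _)
    · have := (key k).2
      calc (c - Real.sqrt (k * D)) ^ 2 ≤ Real.sqrt (s (-(k : ℤ))) ^ 2 := by
            apply pow_le_pow_left₀ h0 this
        _ = s (-(k : ℤ)) := Real.sq_sqrt (hs0 _)
  by_contra hcon
  push_neg at hcon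
  have hd4 : D * (3 + 18 * c ^ 2) < c ^ 4 := by
    have hpos : (0:ℝ) < 3 + 18 * c ^ 2 := by positivity
    calc D * (3 + 18 * c ^ 2) < (c ^ 4 / (3 + 18 * c ^ 2)) * (3 + 18 * c ^ 2) := by
          exact mul_lt_mul_of_pos_right hcon hpos
      _ = c ^ 4 := by field_simp
  rcases eq_or_lt_of_le hD0 with hDeq | hDpos
  · -- D = 0 case
    have hsk : ∀ k : ℕ, c ^ 2 ≤ s (k : ℤ) := by
      intro k
      have h := (key k).1
      rw [← hDeq] at h
      simp at h
      calc c ^ 2 ≤ Real.sqrt (s (k:ℤ)) ^ 2 := by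
            apply pow_le_pow_left₀ hc0.le h
        _ = s (k : ℤ) := Real.sq_sqrt (hs0 _)
    set K := ⌈(c ^ 2)⁻¹⌉₊ + 1 with hK
    have hinj : Function.Injective (fun k : ℕ => (k : ℤ)) := fun a b h => by simpa using h
    have hle : ∑ n ∈ (range K).image (fun k : ℕ => (k : ℤ)), s n ≤ 1 :=
      le_trans (Summable.sum_le_tsum _ (fun i _ => hs0 i) hssum) hs1
    rw [Finset.sum_image (fun x _ y _ h => hinj h)] at hle
    have hge : (K : ℝ) * c ^ 2 ≤ ∑ k ∈ range K, s (k : ℤ) := by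
      calc (K:ℝ) * c ^ 2 = ∑ _k ∈ range K, c ^ 2 := by simp [mul_comm]
        _ ≤ ∑ k ∈ range K, s (k : ℤ) := sum_le_sum fun k _ => hsk k
    have hKc : 1 < (K : ℝ) * c ^ 2 := by
      have h1 : (c ^ 2)⁻¹ ≤ (⌈(c ^ 2)⁻¹⌉₊ : ℝ) := Nat.le_ceil _
      have h2 : (K : ℝ) = (⌈(c ^ 2)⁻¹⌉₊ : ℝ) + 1 := by exact_mod_cast rfl
      have hc2 : (0:ℝ) < c ^ 2 := by positivity
      rw [h2]
      have : ((c ^ 2)⁻¹ + 1) * c ^ 2 = 1 + c ^ 2 := by field_simp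
      nlinarith
    linarith
  · -- D > 0 case
    set T := c ^ 2 / D with hT
    have hTD : T * D = c ^ 2 := div_mul_cancel₀ _ (ne_of_gt hDpos)
    have hc2pos : (0:ℝ) < c ^ 2 := by positivity
    have hTgt : 3 + 18 * c ^ 2 < c ^ 2 * T := by
      have h4 : c ^ 2 * T = c ^ 4 / D := by rw [hT]; field_simp
      rw [h4, lt_div_iff₀ hDpos]; linarith
    have hT21 : 21 ≤ T := by nlinarith
    have hT0 : 0 ≤ T := by linarith
    set N := ⌊T⌋₊ with hN
    have hNleT : (N : ℝ) ≤ T := Nat.floor_le hT0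
    have hTltN : T < N + 1 := Nat.lt_floor_add_one T
    have hN20 : 20 ≤ N := by
      have h20 : (20:ℝ) < (N:ℝ) := by linarith
      exact_mod_cast h20.le
    have hkD : ∀ k : ℕ, k ≤ N → Real.sqrt (k * D) ≤ c := by
      intro k hk
      have hkT : (k : ℝ) ≤ T := le_trans (by exact_mod_cast hk) hNleT
      have h1 : (k : ℝ) * D ≤ c ^ 2 := by
        calc (k:ℝ) * D ≤ T * D := mul_le_mul_of_nonneg_right hkT hDpos.le
          _ = c ^ 2 := hTD
      calc Real.sqrt (k * D) ≤ Real.sqrt (c ^ 2) := Real.sqrt_le_sqrt h1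
        _ = c := Real.sqrt_sq hc0.le
    set e := Real.sqrt D with he
    have he0 : 0 ≤ e := Real.sqrt_nonneg _
    have he2 : e ^ 2 = D := Real.sq_sqrt hD0
    have heD : e ≤ c := by
      have h1 : D ≤ c ^ 2 := by nlinarith
      rw [he]
      calc Real.sqrt D ≤ Real.sqrt (c ^ 2) := Real.sqrt_le_sqrt h1
        _ = c := Real.sqrt_sq hc0.le
    set G : ℕ → ℝ := fun m => c ^ 2 * m - 4/3 * c * e * (Real.sqrt m) ^ 3 + D / 2 * m ^ 2
      with hG
    -- per-term bound
    have perterm : ∀ k : ℕ, 1 ≤ k → k + 1 ≤ N →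
        G (k + 1) - G k ≤ (c - Real.sqrt (((k:ℕ) : ℝ) * D)) ^ 2 := by
      intro k hk1 hkN
      set x := Real.sqrt ((k : ℝ)) with hx
      set y := Real.sqrt ((k : ℝ) + 1) with hy
      have hx0 : 0 ≤ x := Real.sqrt_nonneg _
      have hy0 : 0 ≤ y := Real.sqrt_nonneg _
      have hx2 : x ^ 2 = (k : ℝ) := Real.sq_sqrt (by positivity)
      have hy2 : y ^ 2 = (k : ℝ) + 1 := Real.sq_sqrt (by positivity)
      have hxy : x ≤ y := Real.sqrt_le_sqrt (by linarith)
      have hey : e * y ≤ c := by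
        have h1 := hkD (k + 1) hkN
        have h2 : Real.sqrt (((k + 1 : ℕ)) * D) = y * e := by
          push_cast
          rw [hy, he, Real.sqrt_mul (by positivity) D]
        rw [h2] at h1; linarith [h1]
      have hsq : Real.sqrt ((k : ℝ) * D) = x * e := by
        rw [hx, he]; exact Real.sqrt_mul (by positivity) D
      have hz : y ^ 2 - x ^ 2 - 1 = 0 := by linarith
      have h1 : 3 * (x + y) ≤ 4 * (y ^ 3 - x ^ 3) := by
        have hid2 : 4 * (y ^ 3 - x ^ 3) - 3 * (x + y) = (y - x) ^ 3 := by
          linear_combination 3 * (x + y) * hz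
        linarith [hid2, pow_nonneg (sub_nonneg.2 hxy) 3]
      have hstep : c * e * (x + y) ≤ 4/3 * c * e * (y ^ 3 - x ^ 3) := by
        linarith [mul_le_mul_of_nonneg_left h1 (mul_nonneg hc0.le he0)]
      have hstep2 : e ^ 2 / 2 ≤ c * e * (y - x) := by
        have hA : 0 ≤ e * (y - x) := mul_nonneg he0 (by linarith)
        have hB : e * y * (e * (y - x)) ≤ c * (e * (y - x)) :=
          mul_le_mul_of_nonneg_right hey hA
        have hC : (1:ℝ)/2 ≤ y ^ 2 - x * y := by linarith [sq_nonneg (x - y), hz]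
        linarith [hB, mul_le_mul_of_nonneg_left hC (sq_nonneg e)]
      have hmain : 2 * c * (x * e) + e ^ 2 / 2 ≤ 4/3 * c * e * (y ^ 3 - x ^ 3) := by
        linarith
      have hgoal : G (k + 1) - G k =
          c ^ 2 - 4/3 * c * e * (y ^ 3 - x ^ 3) + D / 2 * (2 * (k:ℝ) + 1) := by
        simp only [hG]
        push_cast
        rw [← hx, ← hy]
        ring
      have hDk : D * (2 * (k:ℝ) + 1) = e ^ 2 * (2 * x ^ 2 + 1) := by
        rw [he2, hx2]
      rw [hgoal, hsq]
      linarith [hmain, hDk]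
    -- telescoping
    have hstep1 : N - 1 + 1 = N := by omega
    have htele : G N - G 1 ≤
        ∑ k ∈ range (N - 1), (c - Real.sqrt ((((k + 1 : ℕ)) : ℝ) * D)) ^ 2 := by
      have hsum : ∑ k ∈ range (N - 1), (G (k + 1 + 1) - G (k + 1)) = G N - G 1 := by
        have h := Finset.sum_range_sub (fun m => G (m + 1)) (N - 1)
        rw [hstep1] at h
        exact h
      rw [← hsum]
      apply sum_le_sum
      intro k hk
      have hk' : k < N - 1 := mem_range.1 hk
      exact perterm (k + 1) (by omega) (by omega)
    -- bound on G N
    have hGN : (T - 1) * (c ^ 2 / 6) ≤ G N := by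
      set q := Real.sqrt ((N:ℝ)) with hq
      have hq0 : 0 ≤ q := Real.sqrt_nonneg _
      have hq2 : q ^ 2 = (N:ℝ) := Real.sq_sqrt (by positivity)
      have hueq : e * q ≤ c := by
        have h1 := hkD N le_rfl
        have h2 : Real.sqrt (((N:ℕ)) * D) = q * e := by
          rw [hq, he]; exact Real.sqrt_mul (by positivity) D
        rw [h2] at h1; linarith
      have hkey : 0 ≤ q ^ 2 * ((c - e * q) * (5 * c - 3 * (e * q))) := by
        apply mul_nonneg (sq_nonneg q)
        apply mul_nonneg (by linarith)
        linarith [hueq, hc0]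
      have hNc : (N:ℝ) * (c ^ 2 / 6) ≤ G N := by
        simp only [hG]
        rw [← hq, ← hq2, ← he2]
        linarith [hkey]
      have hN1 : T - 1 ≤ (N:ℝ) := by linarith
      calc (T - 1) * (c ^ 2 / 6) ≤ (N:ℝ) * (c ^ 2 / 6) :=
            mul_le_mul_of_nonneg_right hN1 (by positivity)
        _ ≤ G N := hNc
    -- bound on G 1
    have hG1 : G 1 ≤ c ^ 2 := by
      simp only [hG]
      rw [Nat.cast_one, Real.sqrt_one]
      linarith [he2, mul_le_mul_of_nonneg_right heD he0, mul_nonneg hc0.le he0]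
    -- assemble the sums
    set A : Finset ℤ := (range (N - 1)).image (fun k : ℕ => (k : ℤ) + 1) with hA
    set B : Finset ℤ := (range (N - 1)).image (fun k : ℕ => -(k : ℤ) - 1) with hB
    have hdisj : Disjoint A B := by
      rw [Finset.disjoint_left]
      intro a ha hb
      rw [hA, Finset.mem_image] at ha
      rw [hB, Finset.mem_image] at hb
      obtain ⟨k1, _, hk1⟩ := ha
      obtain ⟨k2, _, hk2⟩ := hb
      omega
    have h0AB : (0:ℤ) ∉ A ∪ B := by
      rw [Finset.mem_union, hA, hB]
      simp only [Finset.mem_image, not_or]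
      constructor
      · rintro ⟨k, _, hk⟩; omega
      · rintro ⟨k, _, hk⟩; omega
    have htotal : s 0 + (∑ n ∈ A, s n + ∑ n ∈ B, s n) ≤ 1 := by
      have h1 : ∑ n ∈ insert 0 (A ∪ B), s n ≤ 1 :=
        le_trans (Summable.sum_le_tsum _ (fun i _ => hs0 i) hssum) hs1
      rw [Finset.sum_insert h0AB, Finset.sum_union hdisj] at h1
      exact h1
    set Slo := ∑ k ∈ range (N - 1), (c - Real.sqrt ((((k + 1 : ℕ)) : ℝ) * D)) ^ 2 with hSlo
    have hApos : Slo ≤ ∑ n ∈ A, s n := by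
      rw [hA, Finset.sum_image (fun x _ y _ h => by omega), hSlo]
      apply sum_le_sum
      intro k hk
      have hkN : k + 1 ≤ N := by have := mem_range.1 hk; omega
      have h := (keysq (k + 1) (hkD (k + 1) hkN)).1
      have hcast : ((k + 1 : ℕ) : ℤ) = (k : ℤ) + 1 := by push_cast; ring
      rw [hcast] at h
      exact h
    have hBneg : Slo ≤ ∑ n ∈ B, s n := by
      rw [hB, Finset.sum_image (fun x _ y _ h => by omega), hSlo]
      apply sum_le_sum
      intro k hk
      have hkN : k + 1 ≤ N := by have := mem_range.1 hk; omega
      have h := (keysq (k + 1) (hkD (k + 1) hkN)).2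
      have hcast : -((k + 1 : ℕ) : ℤ) = -(k : ℤ) - 1 := by push_cast; ring
      rw [hcast] at h
      exact h
    have hSlo_lb : (T - 1) * (c ^ 2 / 6) - c ^ 2 ≤ Slo := by
      calc (T - 1) * (c ^ 2 / 6) - c ^ 2 ≤ G N - G 1 := sub_le_sub hGN hG1
        _ ≤ Slo := htele
    have h2Slo : c ^ 2 + 2 * Slo ≤ 1 := by
      linarith [hsc, hApos, hBneg, htotal]
    have hfinal : c ^ 2 + 2 * ((T - 1) * (c ^ 2 / 6) - c ^ 2) ≤ 1 := by
      linarith [hSlo_lb, h2Slo]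
    linarith [hfinal, hTgt, hc2pos]

theorem core (c : ℝ) (hc0 : 0 < c) (hc1 : c ≤ 1) (lam : ℤ → ℤ → ℂ)
    (hq : Summable fun p : ℤ × ℤ => ‖lam p.1 p.2‖ ^ 2)
    (htot : ∑' p : ℤ × ℤ, ‖lam p.1 p.2‖ ^ 2 ≤ 1)
    (hrow : c ^ 2 ≤ ∑' i : ℤ, ‖lam i 0‖ ^ 2)
    (hd : Summable fun p : ℤ × ℤ => ‖lam p.1 p.2 - lam p.1 (p.2 + 1)‖ ^ 2) :
    c ^ 4 / (3 + 18 * c ^ 2) ≤ ∑' p : ℤ × ℤ, ‖lam p.1 p.2 - lam p.1 (p.2 + 1)‖ ^ 2 := by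
  haveI : Fact ((1:ℝ≥0∞) ≤ 2) := ⟨one_le_two⟩
  have hp2 : (0:ℝ) < (2:ℝ≥0∞).toReal := by norm_num
  have hrpow : ∀ x : ℝ, x ^ (2:ℝ≥0∞).toReal = x ^ (2:ℕ) := by
    intro x
    rw [show ((2:ℝ≥0∞)).toReal = ((2:ℕ):ℝ) by norm_num, Real.rpow_natCast]
  -- summability of columns
  have hcol : ∀ n : ℤ, Summable fun i : ℤ => ‖lam i n‖ ^ 2 := by
    intro n
    have h := hq.comp_injective (i := fun i : ℤ => (i, n)) (fun a b h => by simpa using h)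
    exact h
  have hdcol : ∀ j : ℤ, Summable fun i : ℤ => ‖lam i j - lam i (j + 1)‖ ^ 2 := by
    intro j
    have h := hd.comp_injective (i := fun i : ℤ => (i, j)) (fun a b h => by simpa using h)
    exact h
  -- lp elements
  have hmem : ∀ n : ℤ, Memℓp (fun i => lam i n) 2 := by
    intro n
    apply memℓp_gen
    exact (hcol n).congr fun i => (hrpow _).symm
  set F : ℤ → lp (fun _ : ℤ => ℂ) 2 := fun n => ⟨fun i => lam i n, hmem n⟩ with hF
  set s : ℤ → ℝ := fun n => ∑' i : ℤ, ‖lam i n‖ ^ 2 with hs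
  set t : ℤ → ℝ := fun j => ∑' i : ℤ, ‖lam i j - lam i (j + 1)‖ ^ 2 with ht
  have hFs : ∀ n, ‖F n‖ ^ (2:ℕ) = s n := by
    intro n
    have h := lp.norm_rpow_eq_tsum hp2 (F n)
    rw [hrpow] at h
    rw [h, hs]
    exact tsum_congr fun i => hrpow _
  have hFt : ∀ j, ‖F j - F (j + 1)‖ ^ (2:ℕ) = t j := by
    intro j
    have h := lp.norm_rpow_eq_tsum hp2 (F j - F (j + 1))
    rw [hrpow] at h
    rw [h, ht]
    exact tsum_congr fun i => hrpow _
  have hsqs : ∀ n, Real.sqrt (s n) = ‖F n‖ := by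
    intro n; rw [← hFs n]; exact Real.sqrt_sq (norm_nonneg _)
  have hsqt : ∀ j, Real.sqrt (t j) = ‖F j - F (j + 1)‖ := by
    intro j; rw [← hFt j]; exact Real.sqrt_sq (norm_nonneg _)
  -- summability and total bounds
  have hq2 : Summable fun p : ℤ × ℤ => ‖lam p.2 p.1‖ ^ 2 := hq.prod_symm
  have hd2 : Summable fun p : ℤ × ℤ => ‖lam p.2 p.1 - lam p.2 (p.1 + 1)‖ ^ 2 := hd.prod_symm
  have hssum : Summable s := hq2.prod
  have htsum : Summable t := hd2.prod
  have hs1 : ∑' n, s n ≤ 1 := by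
    have e1 : ∑' n, s n = ∑' p : ℤ × ℤ, ‖lam p.2 p.1‖ ^ 2 := (Summable.tsum_prod hq2).symm
    have e2 : ∑' p : ℤ × ℤ, ‖lam p.2 p.1‖ ^ 2 = ∑' p : ℤ × ℤ, ‖lam p.1 p.2‖ ^ 2 :=
      (Equiv.prodComm ℤ ℤ).tsum_eq (fun p : ℤ × ℤ => ‖lam p.1 p.2‖ ^ 2)
    rw [e1, e2]; exact htot
  set Dtot := ∑' p : ℤ × ℤ, ‖lam p.1 p.2 - lam p.1 (p.2 + 1)‖ ^ 2 with hDtot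
  have htTot : ∑' j, t j = Dtot := by
    have e1 : ∑' j, t j = ∑' p : ℤ × ℤ, ‖lam p.2 p.1 - lam p.2 (p.1 + 1)‖ ^ 2 :=
      (Summable.tsum_prod hd2).symm
    have e2 : ∑' p : ℤ × ℤ, ‖lam p.2 p.1 - lam p.2 (p.1 + 1)‖ ^ 2 = Dtot :=
      (Equiv.prodComm ℤ ℤ).tsum_eq (fun p : ℤ × ℤ => ‖lam p.1 p.2 - lam p.1 (p.2 + 1)‖ ^ 2)
    rw [e1, e2]
  have ht0 : ∀ j, 0 ≤ t j := fun j => tsum_nonneg fun i => sq_nonneg _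
  have hs0 : ∀ n, 0 ≤ s n := fun n => tsum_nonneg fun i => sq_nonneg _
  have htD : ∀ u : Finset ℤ, ∑ j ∈ u, t j ≤ Dtot := by
    intro u
    calc ∑ j ∈ u, t j ≤ ∑' j, t j := Summable.sum_le_tsum u (fun j _ => ht0 j) htsum
      _ = Dtot := htTot
  -- telescoping triangle inequality
  have teles : ∀ (m : ℤ) (k : ℕ), ‖F m - F (m + k)‖ ≤
      ∑ j ∈ Finset.range k, ‖F (m + j) - F (m + j + 1)‖ := by
    intro m k
    induction k with
    | zero => simp
    | succ k ih =>
        have harg : m + ((k : ℤ) + 1) = m + k + 1 := by ring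
        have heq : F m - F (m + ((k:ℕ) + 1 : ℕ)) =
            (F m - F (m + k)) + (F (m + k) - F (m + k + 1)) := by
          push_cast
          rw [harg]
          abel
        rw [Finset.sum_range_succ]
        calc ‖F m - F (m + ((k:ℕ) + 1 : ℕ))‖
            = ‖(F m - F (m + k)) + (F (m + k) - F (m + k + 1))‖ := by rw [heq]
          _ ≤ ‖F m - F (m + k)‖ + ‖F (m + k) - F (m + k + 1)‖ := norm_add_le _ _
          _ ≤ (∑ j ∈ Finset.range k, ‖F (m + j) - F (m + j + 1)‖) +
              ‖F (m + k) - F (m + k + 1)‖ := by linarith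
  have tripos : ∀ k : ℕ, Real.sqrt (s 0) ≤ Real.sqrt (s k) +
      ∑ j ∈ Finset.range k, Real.sqrt (t j) := by
    intro k
    have h1 : ‖F 0‖ ≤ ‖F (k:ℤ)‖ + ‖F 0 - F (k:ℤ)‖ := by
      have := norm_sub_norm_le (F 0) (F (k:ℤ)); linarith
    have h2 := teles 0 k
    simp only [zero_add] at h2
    rw [hsqs 0, hsqs (k:ℤ)]
    calc ‖F 0‖ ≤ ‖F (k:ℤ)‖ + ‖F 0 - F (k:ℤ)‖ := h1
      _ ≤ ‖F (k:ℤ)‖ + ∑ j ∈ Finset.range k, ‖F (j:ℤ) - F ((j:ℤ) + 1)‖ := by linarith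
      _ = ‖F (k:ℤ)‖ + ∑ j ∈ Finset.range k, Real.sqrt (t (j:ℤ)) := by
          congr 1
          exact Finset.sum_congr rfl fun j _ => (hsqt (j:ℤ)).symm
  have trineg : ∀ k : ℕ, Real.sqrt (s 0) ≤ Real.sqrt (s (-(k:ℤ))) +
      ∑ j ∈ Finset.range k, Real.sqrt (t (-1 - (j:ℤ))) := by
    intro k
    have h1 : ‖F 0‖ ≤ ‖F (-(k:ℤ))‖ + ‖F (-(k:ℤ)) - F 0‖ := by
      have ha := norm_sub_norm_le (F 0) (F (-(k:ℤ)))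
      have hb : ‖F 0 - F (-(k:ℤ))‖ = ‖F (-(k:ℤ)) - F 0‖ := norm_sub_rev _ _
      linarith
    have h2 := teles (-(k:ℤ)) k
    have hzero : -(k:ℤ) + (k:ℤ) = 0 := by ring
    rw [hzero] at h2
    have h3 : ∑ j ∈ Finset.range k, ‖F (-(k:ℤ) + (j:ℤ)) - F (-(k:ℤ) + (j:ℤ) + 1)‖ =
        ∑ j ∈ Finset.range k, ‖F (-1 - (j:ℤ)) - F ((-1 - (j:ℤ)) + 1)‖ := by
      calc ∑ j ∈ Finset.range k, ‖F (-(k:ℤ) + (j:ℤ)) - F (-(k:ℤ) + (j:ℤ) + 1)‖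
          = ∑ j ∈ Finset.range k,
            ‖F (-(k:ℤ) + ((k - 1 - j : ℕ):ℤ)) - F (-(k:ℤ) + ((k - 1 - j : ℕ):ℤ) + 1)‖ :=
            (Finset.sum_range_reflect
              (fun j => ‖F (-(k:ℤ) + (j:ℤ)) - F (-(k:ℤ) + (j:ℤ) + 1)‖) k).symm
        _ = ∑ j ∈ Finset.range k, ‖F (-1 - (j:ℤ)) - F ((-1 - (j:ℤ)) + 1)‖ := by
            refine Finset.sum_congr rfl fun j hj => ?_
            have hjk := mem_range.1 hj
            have h4 : -(k:ℤ) + ((k - 1 - j : ℕ):ℤ) = -1 - (j:ℤ) := by omega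
            rw [h4]
    rw [hsqs 0, hsqs (-(k:ℤ))]
    calc ‖F 0‖ ≤ ‖F (-(k:ℤ))‖ + ‖F (-(k:ℤ)) - F 0‖ := h1
      _ ≤ ‖F (-(k:ℤ))‖ + ∑ j ∈ Finset.range k, ‖F (-1 - (j:ℤ)) - F ((-1 - (j:ℤ)) + 1)‖ := by
          rw [← h3]; linarith
      _ = ‖F (-(k:ℤ))‖ + ∑ j ∈ Finset.range k, Real.sqrt (t (-1 - (j:ℤ))) := by
          congr 1
          exact Finset.sum_congr rfl fun j _ => (hsqt (-1 - (j:ℤ))).symm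
  exact oneD c Dtot hc0 hc1 s t hs0 hssum hs1 hrow ht0 htD tripos trineg

theorem keyconv {α : Type*} (g : α → ℂ) (hg : (∑' a, (‖g a‖₊ : ℝ≥0∞) ^ 2) ≠ ⊤) :
    Summable (fun a => ‖g a‖ ^ 2) ∧
      (∑' a, (‖g a‖₊ : ℝ≥0∞) ^ 2).toReal = ∑' a, ‖g a‖ ^ 2 := by
  have h1 : ∀ a, ((‖g a‖₊ ^ 2 : ℝ≥0) : ℝ≥0∞) = (‖g a‖₊ : ℝ≥0∞) ^ 2 := fun a => by
    push_cast; rfl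
  have hg' : (∑' a, ((‖g a‖₊ ^ 2 : ℝ≥0) : ℝ≥0∞)) ≠ ⊤ := by
    rwa [tsum_congr h1]
  have hsum : Summable (fun a => (‖g a‖₊ ^ 2 : ℝ≥0)) :=
    ENNReal.tsum_coe_ne_top_iff_summable.1 hg'
  have hcoe : ∀ a, ((‖g a‖₊ ^ 2 : ℝ≥0) : ℝ) = ‖g a‖ ^ 2 := fun a => by
    push_cast [coe_nnnorm]; rfl
  constructor
  · have := NNReal.summable_coe.2 hsum
    exact this.congr hcoe
  · rw [← tsum_congr h1, ← ENNReal.coe_tsum hsum, ENNReal.coe_toReal, NNReal.coe_tsum]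
    exact tsum_congr hcoe

/-- Lemma 6.2 of the paper: key real-analytic lower bound. -/
theorem stmt0 (c : ℝ) (hc0 : 0 < c) (hc1 : c ≤ 1) (lam : ℤ → ℤ → ℂ)
    (h1 : ∑' (i : ℤ) (j : ℤ), (‖lam i j‖₊ : ℝ≥0∞) ^ 2 ≤ 1)
    (h2 : ENNReal.ofReal (c ^ 2) ≤ ∑' (i : ℤ), (‖lam i 0‖₊ : ℝ≥0∞) ^ 2) :
    ENNReal.ofReal (c ^ 4 / (3 + 18 * c ^ 2)) ≤
      ∑' (i : ℤ) (j : ℤ), (‖lam i j - lam i (j + 1)‖₊ : ℝ≥0∞) ^ 2 := by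
  have hprod1 : ∑' (p : ℤ × ℤ), (‖lam p.1 p.2‖₊ : ℝ≥0∞) ^ 2 =
      ∑' (i : ℤ) (j : ℤ), (‖lam i j‖₊ : ℝ≥0∞) ^ 2 := ENNReal.tsum_prod'
  have hprod2 : ∑' (p : ℤ × ℤ), (‖lam p.1 p.2 - lam p.1 (p.2 + 1)‖₊ : ℝ≥0∞) ^ 2 =
      ∑' (i : ℤ) (j : ℤ), (‖lam i j - lam i (j + 1)‖₊ : ℝ≥0∞) ^ 2 := ENNReal.tsum_prod'
  rw [← hprod2]
  rw [← hprod1] at h1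
  by_cases htop : (∑' (p : ℤ × ℤ), (‖lam p.1 p.2 - lam p.1 (p.2 + 1)‖₊ : ℝ≥0∞) ^ 2) = ⊤
  · rw [htop]; exact le_top
  · obtain ⟨hdsum, hdeq⟩ := keyconv (fun p : ℤ × ℤ => lam p.1 p.2 - lam p.1 (p.2 + 1)) htop
    have h1ne : (∑' (p : ℤ × ℤ), (‖lam p.1 p.2‖₊ : ℝ≥0∞) ^ 2) ≠ ⊤ :=
      ne_top_of_le_ne_top ENNReal.one_ne_top h1
    obtain ⟨hqsum, hqeq⟩ := keyconv (fun p : ℤ × ℤ => lam p.1 p.2) h1ne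
    have htot : ∑' p : ℤ × ℤ, ‖lam p.1 p.2‖ ^ 2 ≤ 1 := by
      rw [← hqeq]
      have := ENNReal.toReal_mono ENNReal.one_ne_top h1
      simpa using this
    -- row
    have hrowle : (∑' (i : ℤ), (‖lam i 0‖₊ : ℝ≥0∞) ^ 2) ≤
        ∑' (p : ℤ × ℤ), (‖lam p.1 p.2‖₊ : ℝ≥0∞) ^ 2 := by
      exact ENNReal.tsum_comp_le_tsum_of_injective
        (f := fun i : ℤ => ((i, 0) : ℤ × ℤ)) (fun a b h => by simpa using h) _
    have hrowne : (∑' (i : ℤ), (‖lam i 0‖₊ : ℝ≥0∞) ^ 2) ≠ ⊤ :=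
      ne_top_of_le_ne_top h1ne hrowle
    obtain ⟨hrsum, hreq⟩ := keyconv (fun i : ℤ => lam i 0) hrowne
    have hrow : c ^ 2 ≤ ∑' i : ℤ, ‖lam i 0‖ ^ 2 := by
      rw [← hreq]
      rw [ENNReal.ofReal_le_iff_le_toReal hrowne] at h2
      exact h2
    rw [ENNReal.ofReal_le_iff_le_toReal htop, hdeq]
    exact core c hc0 hc1 lam hqsum htot hrow hdsum
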